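/- For any real s > 0 and any integer n ≥ 1 with s² ≤ n/2, the tail of the discrete Gaussian weights satisfies (Σ_{|ℓ| > n} exp(−πℓ²/s²)) / (Σ_{ℓ ∈ ℤ} exp(−πℓ²/s²)) ≤ Σ_{|ℓ| > n} exp(−2ℓ²/n) ≤ exp(−n/10). -/

import Mathlib

open Real

lemma summable_exp_neg_sq_nat_aux {b : ℝ} (hb : 0 < b) :
    Summable (fun k : ℕ => Real.exp (-b * (k : ℝ) ^ 2)) := by
  have hgeo : Summable (fun k : ℕ => Real.exp (-b) ^ k) :=
    summable_geometric_of_lt_one (Real.exp_pos _).le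
      (Real.exp_lt_one_iff.mpr (by linarith))
  refine Summable.of_nonneg_of_le (fun k => (Real.exp_pos _).le) (fun k => ?_) hgeo
  rw [← Real.exp_nat_mul, Real.exp_le_exp]
  have hk : (k : ℝ) ≤ (k : ℝ) ^ 2 := by
    exact_mod_cast Nat.le_self_pow two_ne_zero k
  nlinarith

lemma summable_exp_neg_sq_int_aux {b : ℝ} (hb : 0 < b) :
    Summable (fun ℓ : ℤ => Real.exp (-b * (ℓ : ℝ) ^ 2)) := by
  apply Summable.of_nat_of_neg
  · exact summable_exp_neg_sq_nat_aux hb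
  · have := summable_exp_neg_sq_nat_aux hb
    convert this using 2 with k
    push_cast
    · rfl
    · push_cast
      ring_nf

/-- Discrete Gaussian tail bound: for `s > 0`, `n ≥ 1` with `s² ≤ n/2`,
`(Σ_{|ℓ|>n} e^{−πℓ²/s²}) / (Σ_ℓ e^{−πℓ²/s²}) ≤ Σ_{|ℓ|>n} e^{−2ℓ²/n} ≤ e^{−n/10}`. -/
theorem stmt_5 (s : ℝ) (n : ℕ) (hs : 0 < s) (hn : 1 ≤ n)
    (hsn : s ^ 2 ≤ (n : ℝ) / 2) :
    (∑' ℓ : ℤ, if (n : ℤ) < |ℓ| then Real.exp (-Real.pi * (ℓ : ℝ) ^ 2 / s ^ 2) else 0)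
        / (∑' ℓ : ℤ, Real.exp (-Real.pi * (ℓ : ℝ) ^ 2 / s ^ 2))
      ≤ ∑' ℓ : ℤ, (if (n : ℤ) < |ℓ| then Real.exp (-2 * (ℓ : ℝ) ^ 2 / n) else 0) ∧
    (∑' ℓ : ℤ, if (n : ℤ) < |ℓ| then Real.exp (-2 * (ℓ : ℝ) ^ 2 / n) else 0)
      ≤ Real.exp (-(n : ℝ) / 10) := by
  have hn1 : (1 : ℝ) ≤ (n : ℝ) := by exact_mod_cast hn
  have hnpos : (0 : ℝ) < (n : ℝ) := by linarith
  have hs2 : (0 : ℝ) < s ^ 2 := by positivity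
  have hpi := Real.pi_gt_three
  -- summability of the full Gaussian
  have hsumg : Summable (fun ℓ : ℤ => Real.exp (-Real.pi * (ℓ : ℝ) ^ 2 / s ^ 2)) := by
    have : (0 : ℝ) < Real.pi / s ^ 2 := by positivity
    convert summable_exp_neg_sq_int_aux this using 2 with ℓ
    ring_nf
  -- summability of exp(-2ℓ²/n)
  have hsum2n : Summable (fun ℓ : ℤ => Real.exp (-2 * (ℓ : ℝ) ^ 2 / n)) := by
    have h2n : (0 : ℝ) < 2 / (n : ℝ) := by positivity
    convert summable_exp_neg_sq_int_aux h2n using 2 with ℓ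
    field_simp
  have hsumf1 : Summable (fun ℓ : ℤ =>
      if (n : ℤ) < |ℓ| then Real.exp (-Real.pi * (ℓ : ℝ) ^ 2 / s ^ 2) else 0) := by
    apply Summable.of_nonneg_of_le _ _ hsumg
    · intro ℓ; split <;> positivity
    · intro ℓ; split
      · exact le_rfl
      · exact (Real.exp_pos _).le
  have hsumf2 : Summable (fun ℓ : ℤ =>
      if (n : ℤ) < |ℓ| then Real.exp (-2 * (ℓ : ℝ) ^ 2 / n) else 0) := by
    apply Summable.of_nonneg_of_le _ _ hsum2n
    · intro ℓ; split <;> positivity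
    · intro ℓ; split
      · exact le_rfl
      · exact (Real.exp_pos _).le
  -- the denominator is at least 1
  have hB : (1 : ℝ) ≤ ∑' ℓ : ℤ, Real.exp (-Real.pi * (ℓ : ℝ) ^ 2 / s ^ 2) := by
    have h0 := Summable.le_tsum hsumg 0 (fun i _ => (Real.exp_pos _).le)
    simpa using h0
  have hA0 : (0 : ℝ) ≤ ∑' ℓ : ℤ,
      if (n : ℤ) < |ℓ| then Real.exp (-Real.pi * (ℓ : ℝ) ^ 2 / s ^ 2) else 0 :=
    tsum_nonneg (fun ℓ => by split <;> positivity)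
  -- termwise comparison for the first inequality
  have hterm : ∀ ℓ : ℤ,
      (if (n : ℤ) < |ℓ| then Real.exp (-Real.pi * (ℓ : ℝ) ^ 2 / s ^ 2) else 0) ≤
      (if (n : ℤ) < |ℓ| then Real.exp (-2 * (ℓ : ℝ) ^ 2 / n) else 0) := by
    intro ℓ
    split
    · rw [Real.exp_le_exp, div_le_div_iff₀ hs2 hnpos]
      nlinarith [sq_nonneg ((ℓ : ℝ)), mul_nonneg (sq_nonneg ((ℓ : ℝ))) hnpos.le,
        mul_le_mul_of_nonneg_left hsn (sq_nonneg ((ℓ : ℝ)))]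
    · exact le_rfl
  constructor
  · calc (∑' ℓ : ℤ, if (n : ℤ) < |ℓ| then Real.exp (-Real.pi * (ℓ : ℝ) ^ 2 / s ^ 2) else 0)
          / (∑' ℓ : ℤ, Real.exp (-Real.pi * (ℓ : ℝ) ^ 2 / s ^ 2))
        ≤ (∑' ℓ : ℤ, if (n : ℤ) < |ℓ| then Real.exp (-Real.pi * (ℓ : ℝ) ^ 2 / s ^ 2) else 0) :=
          div_le_self hA0 hB
      _ ≤ _ := Summable.tsum_le_tsum hterm hsumf1 hsumf2
  · -- second inequality
    set F : ℤ → ℝ := fun ℓ => if (n : ℤ) < |ℓ| then Real.exp (-2 * (ℓ : ℝ) ^ 2 / n) else 0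
      with hF
    -- bound on positive-index terms
    have hkey : ∀ k : ℕ, F (k + 1) ≤ Real.exp (-(n : ℝ) - 2) * Real.exp (-1) ^ k := by
      intro k
      rw [← Real.exp_nat_mul, ← Real.exp_add]
      simp only [hF]
      split
      · rename_i hk
        rw [Real.exp_le_exp]
        have hk' : (n : ℝ) ≤ (k : ℝ) := by
          have : (n : ℤ) < (k : ℤ) + 1 := by
            have := hk
            rwa [abs_of_nonneg (by positivity)] at this
          have : (n : ℤ) ≤ (k : ℤ) := by omega
          exact_mod_cast this
        rw [div_le_iff₀ hnpos]
        push_cast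
        nlinarith [sq_nonneg ((k : ℝ) - (n : ℝ)), sq_nonneg ((k : ℝ) + 1)]
      · positivity
    have hFneg : ∀ k : ℕ, F (-(k + 1)) = F (k + 1) := by
      intro k
      simp only [hF, abs_neg]
      norm_num
      ring_nf
    have hgeosum : Summable (fun k : ℕ => Real.exp (-(n : ℝ) - 2) * Real.exp (-1) ^ k) :=
      (summable_geometric_of_lt_one (Real.exp_pos _).le
        (Real.exp_lt_one_iff.mpr (by norm_num))).mul_left _
    have hsumpos : Summable (fun k : ℕ => F (k + 1)) :=
      Summable.of_nonneg_of_le (fun k => by simp only [hF]; split <;> positivity) hkey hgeosum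
    have hsumneg : Summable (fun k : ℕ => F (-(k + 1))) := by
      simpa only [hFneg] using hsumpos
    have hsplit : (∑' ℓ : ℤ, F ℓ) = (∑' k : ℕ, F (k + 1)) + F 0 + ∑' k : ℕ, F (-(k + 1)) :=
      tsum_of_add_one_of_neg_add_one hsumpos hsumneg
    have hF0 : F 0 = 0 := by
      simp only [hF]
      norm_num
    have hgeo : (∑' k : ℕ, Real.exp (-(n : ℝ) - 2) * Real.exp (-1) ^ k)
        = Real.exp (-(n : ℝ) - 2) * (1 - Real.exp (-1))⁻¹ := by
      rw [tsum_mul_left, tsum_geometric_of_lt_one (Real.exp_pos _).le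
        (Real.exp_lt_one_iff.mpr (by norm_num))]
    have hpos_le : (∑' k : ℕ, F (k + 1)) ≤ Real.exp (-(n : ℝ) - 2) * (1 - Real.exp (-1))⁻¹ := by
      rw [← hgeo]
      exact Summable.tsum_le_tsum hkey hsumpos hgeosum
    -- numeric estimates
    have e1 : (2 : ℝ) ≤ Real.exp 1 := by
      have := Real.exp_one_gt_d9; linarith
    have e2 : (4 : ℝ) ≤ Real.exp 2 := by
      rw [show (2 : ℝ) = 1 + 1 by norm_num, Real.exp_add]; nlinarith
    have hexp1 : Real.exp (-1) ≤ 1 / 2 := by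
      rw [Real.exp_neg]
      rw [inv_le_comm₀ (Real.exp_pos _) (by norm_num)]
      linarith
    have hinv : (1 - Real.exp (-1))⁻¹ ≤ 2 := by
      rw [inv_le_comm₀ (by nlinarith [Real.exp_pos (-1)]) (by norm_num)]
      linarith
    have hsmall : Real.exp (-(n : ℝ) - 2) ≤ Real.exp (-(n : ℝ) / 10) * (1 / 4) := by
      have h29 : Real.exp (-(n : ℝ) - 2) ≤ Real.exp (-(n : ℝ) / 10) * Real.exp (-2) := by
        rw [← Real.exp_add, Real.exp_le_exp]
        linarith
      have h4 : Real.exp (-2) ≤ 1 / 4 := by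
        rw [Real.exp_neg, inv_le_comm₀ (Real.exp_pos _) (by norm_num)]
        linarith
      nlinarith [Real.exp_pos (-(n : ℝ) / 10)]
    calc (∑' ℓ : ℤ, F ℓ) = (∑' k : ℕ, F (k + 1)) + F 0 + ∑' k : ℕ, F (-(k + 1)) := hsplit
      _ = 2 * ∑' k : ℕ, F (k + 1) := by
          rw [hF0, tsum_congr hFneg]; ring
      _ ≤ 2 * (Real.exp (-(n : ℝ) - 2) * (1 - Real.exp (-1))⁻¹) := by
          have h0 : (0 : ℝ) ≤ ∑' k : ℕ, F (k + 1) :=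
            tsum_nonneg (fun k => by simp only [hF]; split <;> positivity)
          have hinvpos : (0 : ℝ) ≤ (1 - Real.exp (-1))⁻¹ := by
            apply inv_nonneg.mpr; linarith
          nlinarith [hpos_le]
      _ ≤ Real.exp (-(n : ℝ) / 10) := by
          have hinvpos2 : (0 : ℝ) ≤ (1 - Real.exp (-1))⁻¹ := by
            apply inv_nonneg.mpr; linarith
          have hprod := mul_le_mul hsmall hinv hinvpos2
            (le_of_lt (by positivity : (0:ℝ) < Real.exp (-(n : ℝ) / 10) * (1 / 4)))
          linarith
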